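/- Fix an integer A ≥ 1 and γ > 0. Let (Ω, 𝔉, μ) be a probability space, let F : Ω → (Fin A → ℝ) be measurable with ω ↦ F(ω)(π) and ω ↦ (F(ω)(π))² integrable for every π ∈ Fin A, and let a* : Ω → Fin A be measurable with F(ω)(a*(ω)) = max_{π} F(ω)(π) for every ω. Define the posterior-sampling distribution p on Fin A by p(π) := μ({ω : a*(ω) = π}). Then for every function f̄ : Fin A → ℝ: ∑_{π ∈ Fin A} p(π) · ∫ [ F(ω)(a*(ω)) − F(ω)(π) − γ·(F(ω)(π) − f̄(π))² ] dμ(ω) ≤ A/γ. -/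

import Mathlib

open MeasureTheory

/-- Bayesian upper bound on the squared-error Decision-Estimation
Coefficient for the multi-armed bandit via posterior sampling. `F ω` is the
random mean-reward vector of a model `ω` drawn from the prior `μ`, `astar ω`
is its optimal arm, and `fbar` is the mean-reward function of an arbitrary
reference model. -/
theorem posterior_sampling_dec_bound (A : ℕ) (hA : 1 ≤ A) (γ : ℝ) (hγ : 0 < γ)
    {Ω : Type*} [MeasurableSpace Ω] (μ : Measure Ω) [IsProbabilityMeasure μ]
    (F : Ω → Fin A → ℝ) (hF : Measurable F)
    (hF_int : ∀ π : Fin A, Integrable (fun ω => F ω π) μ)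
    (hF_sq_int : ∀ π : Fin A, Integrable (fun ω => (F ω π) ^ 2) μ)
    (astar : Ω → Fin A) (ha_meas : Measurable astar)
    (ha_opt : ∀ ω π, F ω π ≤ F ω (astar ω))
    (fbar : Fin A → ℝ) :
    (∑ π : Fin A, (μ {ω | astar ω = π}).toReal *
        ∫ ω, (F ω (astar ω) - F ω π - γ * (F ω π - fbar π) ^ 2) ∂μ) ≤ (A : ℝ) / γ := by
  -- Basic objects
  set S : Fin A → Set Ω := fun π => {ω | astar ω = π} with hS_def
  have hS : ∀ π, MeasurableSet (S π) := fun π => ha_meas (measurableSet_singleton π)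
  set p : Fin A → ℝ := fun π => (μ (S π)).toReal with hp_def
  have hp_nonneg : ∀ π, 0 ≤ p π := fun π => ENNReal.toReal_nonneg
  set ind : Fin A → Ω → ℝ := fun π => (S π).indicator (fun _ => (1 : ℝ)) with hind_def
  set g : Fin A → Ω → ℝ := fun π ω => F ω π - fbar π with hg_def
  -- sum of p is 1
  have hsum_p : ∑ π, p π = 1 := by
    have h1 : ∑ π, μ (S π) = μ (astar ⁻¹' (Finset.univ : Finset (Fin A))) :=
      sum_measure_preimage_singleton _ (fun y _ => ha_meas (measurableSet_singleton y))
    have h2 : (astar ⁻¹' (Finset.univ : Finset (Fin A))) = Set.univ := by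
      ext ω; simp
    rw [h2, measure_univ] at h1
    have := ENNReal.toReal_sum (s := (Finset.univ : Finset (Fin A)))
      (f := fun π => μ (S π)) (fun π _ => measure_ne_top μ _)
    rw [h1] at this
    simpa [hp_def] using this.symm
  -- integrability facts
  have hg_int : ∀ π, Integrable (g π) μ := fun π => (hF_int π).sub (integrable_const _)
  have hg_sq_int : ∀ π, Integrable (fun ω => g π ω ^ 2) μ := by
    intro π
    have : (fun ω => g π ω ^ 2)
        = fun ω => (F ω π) ^ 2 - (2 * fbar π) * F ω π + (fbar π) ^ 2 := by
      funext ω; simp only [hg_def]; ring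
    rw [this]
    exact ((hF_sq_int π).sub ((hF_int π).const_mul _)).add (integrable_const _)
  have hindg_eq : ∀ π, (fun ω => ind π ω * g π ω) = (S π).indicator (g π) := by
    intro π; funext ω
    by_cases h : ω ∈ S π <;> simp [hind_def, Set.indicator_of_mem, Set.indicator_of_notMem, h]
  have hindg_int : ∀ π, Integrable (fun ω => ind π ω * g π ω) μ := by
    intro π; rw [hindg_eq π]; exact (hg_int π).indicator (hS π)
  have hind_int : ∀ π, Integrable (ind π) μ := fun π => (integrable_const 1).indicator (hS π)
  have hind_integral : ∀ π, ∫ ω, ind π ω ∂μ = p π := by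
    intro π
    simpa [hp_def, Measure.real] using integral_indicator_const (1 : ℝ) (hS π)
  have hind_sq : ∀ π ω, ind π ω ^ 2 = ind π ω := by
    intro π ω; by_cases h : ω ∈ S π <;> simp [hind_def, h]
  -- key per-arm inequality
  have hkey : ∀ π, (∫ ω, ind π ω * g π ω ∂μ) - p π * ∫ ω, g π ω ∂μ
      ≤ γ * p π * ∫ ω, g π ω ^ 2 ∂μ + 1 / (4 * γ) := by
    intro π
    by_cases hp0 : μ (S π) = 0
    · have hp0' : p π = 0 := by simp [hp_def, hp0]
      have hz : (∫ ω, ind π ω * g π ω ∂μ) = 0 := by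
        rw [hindg_eq π, integral_indicator (hS π), Measure.restrict_eq_zero.mpr hp0,
          integral_zero_measure]
      rw [hz, hp0']
      have : (0:ℝ) < 1 / (4 * γ) := by positivity
      linarith
    · have hppos : 0 < p π := by
        simp only [hp_def]
        exact ENNReal.toReal_pos hp0 (measure_ne_top μ _)
      have hc : 0 < 4 * γ * p π := by positivity
      -- pointwise inequality
      have hpt : ∀ ω, (ind π ω - p π) * g π ω
          ≤ γ * p π * g π ω ^ 2 + (ind π ω - p π) ^ 2 / (4 * γ * p π) := by
        intro ω
        have hq : (ind π ω - p π) * g π ω - γ * p π * g π ω ^ 2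
            ≤ (ind π ω - p π) ^ 2 / (4 * γ * p π) := by
          rw [le_div_iff₀ hc]
          nlinarith [sq_nonneg (2 * γ * p π * g π ω - (ind π ω - p π)), sq_nonneg (g π ω),
            mul_pos hγ hppos]
        linarith
      -- integrability of both sides
      have hL_eq : (fun ω => (ind π ω - p π) * g π ω)
          = fun ω => ind π ω * g π ω - p π * g π ω := by funext ω; ring
      have hL_int : Integrable (fun ω => (ind π ω - p π) * g π ω) μ := by
        rw [hL_eq]; exact (hindg_int π).sub ((hg_int π).const_mul _)
      have hR_eq : (fun ω => γ * p π * g π ω ^ 2 + (ind π ω - p π) ^ 2 / (4 * γ * p π))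
          = fun ω => γ * p π * g π ω ^ 2
              + (ind π ω * ((1 - 2 * p π) / (4 * γ * p π)) + p π ^ 2 / (4 * γ * p π)) := by
        funext ω
        have := hind_sq π ω
        field_simp
        nlinarith [hind_sq π ω]
      have hI1 : Integrable (fun ω => γ * p π * g π ω ^ 2) μ := (hg_sq_int π).const_mul _
      have hI3 : Integrable (fun ω => ind π ω * ((1 - 2 * p π) / (4 * γ * p π))) μ :=
        (hind_int π).mul_const _
      have hI2 : Integrable
          (fun ω => ind π ω * ((1 - 2 * p π) / (4 * γ * p π)) + p π ^ 2 / (4 * γ * p π)) μ :=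
        hI3.add (integrable_const _)
      have hR_int : Integrable
          (fun ω => γ * p π * g π ω ^ 2 + (ind π ω - p π) ^ 2 / (4 * γ * p π)) μ := by
        rw [hR_eq]
        exact hI1.add hI2
      have hmono := integral_mono hL_int hR_int hpt
      -- compute both integrals
      have hI4 : Integrable (fun ω => p π * g π ω) μ := (hg_int π).const_mul _
      have hLI : ∫ ω, (ind π ω - p π) * g π ω ∂μ
          = (∫ ω, ind π ω * g π ω ∂μ) - p π * ∫ ω, g π ω ∂μ := by
        rw [hL_eq, integral_sub (hindg_int π) hI4, integral_const_mul]
      have hRI : ∫ ω, (γ * p π * g π ω ^ 2 + (ind π ω - p π) ^ 2 / (4 * γ * p π)) ∂μ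
          = γ * p π * (∫ ω, g π ω ^ 2 ∂μ)
            + (p π * ((1 - 2 * p π) / (4 * γ * p π)) + p π ^ 2 / (4 * γ * p π)) := by
        rw [hR_eq, integral_add hI1 hI2, integral_const_mul,
          integral_add hI3 (integrable_const _),
          integral_mul_const, hind_integral π, integral_const]
        simp
      rw [hLI, hRI] at hmono
      have hrem : p π * ((1 - 2 * p π) / (4 * γ * p π)) + p π ^ 2 / (4 * γ * p π)
          ≤ 1 / (4 * γ) := by
        have heq : p π * ((1 - 2 * p π) / (4 * γ * p π)) + p π ^ 2 / (4 * γ * p π)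
            = (1 - p π) / (4 * γ) := by
          field_simp
          ring
        rw [heq, div_le_div_iff₀ (by positivity) (by positivity)]
        nlinarith [hp_nonneg π]
      linarith
  -- Integrability of F ω (astar ω)
  have hrep : (fun ω => F ω (astar ω))
      = fun ω => ∑ π, (S π).indicator (fun ω' => F ω' π) ω := by
    funext ω
    rw [Finset.sum_eq_single (astar ω)]
    · rw [Set.indicator_of_mem (by simp [hS_def] : ω ∈ S (astar ω))]
    · intro b _ hb
      exact Set.indicator_of_notMem (by simp [hS_def]; exact fun h => hb h.symm) _
    · simp
  have hFa_int : Integrable (fun ω => F ω (astar ω)) μ := by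
    rw [hrep]
    exact integrable_finset_sum _ (fun π _ => (hF_int π).indicator (hS π))
  have hFa_integral : ∫ ω, F ω (astar ω) ∂μ
      = ∑ π, ((∫ ω, ind π ω * g π ω ∂μ) + p π * fbar π) := by
    rw [hrep, integral_finset_sum _ (fun π _ => (hF_int π).indicator (hS π))]
    refine Finset.sum_congr rfl fun π _ => ?_
    have h1 : ((S π).indicator (fun ω' => F ω' π))
        = fun ω => ind π ω * g π ω + ind π ω * fbar π := by
      funext ω
      by_cases h : ω ∈ S π <;>
        simp [hind_def, hg_def, Set.indicator_of_mem, Set.indicator_of_notMem, h]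
    rw [h1, integral_add (hindg_int π) ((hind_int π).mul_const _), integral_mul_const,
      hind_integral π]
  -- rewrite the LHS
  have hinner : ∀ π, ∫ ω, (F ω (astar ω) - F ω π - γ * (F ω π - fbar π) ^ 2) ∂μ
      = (∫ ω, F ω (astar ω) ∂μ) - ((∫ ω, g π ω ∂μ) + fbar π) - γ * ∫ ω, g π ω ^ 2 ∂μ := by
    intro π
    have hFπ : (fun ω => F ω π) = fun ω => g π ω + fbar π := by
      funext ω; simp [hg_def]
    have h2 : ∫ ω, F ω π ∂μ = (∫ ω, g π ω ∂μ) + fbar π := by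
      rw [hFπ, integral_add (hg_int π) (integrable_const _), integral_const]
      simp
    have hgsq : ∀ ω, (F ω π - fbar π) ^ 2 = g π ω ^ 2 := fun ω => rfl
    have hD : Integrable (fun ω => F ω (astar ω) - F ω π) μ := hFa_int.sub (hF_int π)
    have hQ : Integrable (fun ω => γ * g π ω ^ 2) μ := (hg_sq_int π).const_mul γ
    calc ∫ ω, (F ω (astar ω) - F ω π - γ * (F ω π - fbar π) ^ 2) ∂μ
        = (∫ ω, (F ω (astar ω) - F ω π) ∂μ) - ∫ ω, γ * g π ω ^ 2 ∂μ := by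
          rw [← integral_sub hD hQ]
      _ = (∫ ω, F ω (astar ω) ∂μ) - (∫ ω, F ω π ∂μ) - γ * ∫ ω, g π ω ^ 2 ∂μ := by
          rw [integral_sub hFa_int (hF_int π), integral_const_mul]
      _ = _ := by rw [h2]
  calc (∑ π : Fin A, (μ {ω | astar ω = π}).toReal *
        ∫ ω, (F ω (astar ω) - F ω π - γ * (F ω π - fbar π) ^ 2) ∂μ)
      = ∑ π, (p π * (∫ ω, F ω (astar ω) ∂μ) - p π * (∫ ω, g π ω ∂μ) - p π * fbar π
          - γ * p π * (∫ ω, g π ω ^ 2 ∂μ)) := by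
        refine Finset.sum_congr rfl fun π _ => ?_
        rw [hinner π]; ring
    _ = (∫ ω, F ω (astar ω) ∂μ) - ∑ π, (p π * fbar π)
          - ∑ π, (p π * (∫ ω, g π ω ∂μ)) - ∑ π, (γ * p π * (∫ ω, g π ω ^ 2 ∂μ)) := by
        rw [Finset.sum_sub_distrib, Finset.sum_sub_distrib, Finset.sum_sub_distrib,
          ← Finset.sum_mul, hsum_p, one_mul]
        ring
    _ = ∑ π, ((∫ ω, ind π ω * g π ω ∂μ) - p π * (∫ ω, g π ω ∂μ)
          - γ * p π * (∫ ω, g π ω ^ 2 ∂μ)) := by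
        rw [hFa_integral, Finset.sum_sub_distrib, Finset.sum_sub_distrib,
          Finset.sum_add_distrib]
        ring
    _ ≤ ∑ π : Fin A, 1 / (4 * γ) := by
        refine Finset.sum_le_sum fun π _ => ?_
        have := hkey π
        linarith
    _ = (A : ℝ) / (4 * γ) := by
        simp [Finset.sum_const, Finset.card_univ]
        ring
    _ ≤ (A : ℝ) / γ := by
        apply div_le_div_of_nonneg_left (by positivity) hγ
        linarith
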